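/- arXiv:0812.1728 — 7 statements merged into one kernel-verified Lean document; each statement's English description precedes it below -/
import Mathlib

section
/- Double negation: if x̄ is a negation of x and x̿ is a negation of x̄, then {x̿} ~ {x}. -/
structure ConsistencySpace (X : Type*) [Nonempty X] where
  P : Set (Set X)
  univ_not_mem : Set.univ ∉ P
  singleton_mem : ∀ x : X, {x} ∈ P
  downward : ∀ ⦃A B : Set X⦄, A ∈ P → B ⊆ A → B ∈ P

def ConsistencySpace.Equiv {X : Type*} [Nonempty X] (C : ConsistencySpace X)
    (χ γ : Set X) : Prop :=
  ∀ κ : Set X, χ ∪ κ ∈ C.P ↔ γ ∪ κ ∈ C.P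

def ConsistencySpace.IsNegation {X : Type*} [Nonempty X] (C : ConsistencySpace X)
    (x y : X) : Prop :=
  ({x, y} : Set X) ∉ C.P ∧
  (∀ z : Set X, {x} ∪ z ∉ C.P → C.Equiv ({y} ∪ z) z) ∧
  (∀ z : Set X, {y} ∪ z ∉ C.P → C.Equiv ({x} ∪ z) z)

def ConsistencySpace.IsNegationSet {X : Type*} [Nonempty X] (C : ConsistencySpace X)
    (A : Set X) (a : X) : Prop :=
  A ∪ {a} ∉ C.P ∧
  (∀ z : Set X, A ∪ z ∉ C.P → C.Equiv ({a} ∪ z) z) ∧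
  (∀ z : Set X, {a} ∪ z ∉ C.P → C.Equiv (A ∪ z) z)

theorem double_negation {X : Type*} [Nonempty X] (C : ConsistencySpace X)
    (x xb xbb : X) (h₁ : C.IsNegation x xb) (h₂ : C.IsNegation xb xbb) :
    C.Equiv {xbb} {x} := by
  intro κ
  constructor
  · intro h
    by_contra hx
    have hequiv := h₁.2.1 κ hx
    have hmem : {xb} ∪ κ ∪ {xbb} ∈ C.P := by
      apply (hequiv {xbb}).mpr
      rw [Set.union_comm]
      exact h
    exact h₂.1 (C.downward hmem (by intro a ha; simp at ha ⊢; tauto))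
  · intro h
    by_contra hxbb
    have hequiv := h₂.2.2 κ hxbb
    have hmem : {xb} ∪ κ ∪ {x} ∈ C.P := by
      apply (hequiv {x}).mpr
      rw [Set.union_comm]
      exact h
    exact h₁.1 (C.downward hmem (by intro a ha; simp at ha ⊢; tauto))
end

section
/- If {x} ~ {y}, x̄ is a negation of x, and ȳ is a negation of y, then {x̄} ~ {ȳ}. -/
lemma neg_dir {X : Type*} [Nonempty X] (C : ConsistencySpace X)
    (x y xb yb : X) (hxy : C.Equiv {x} {y})
    (hx1 : ({x, xb} : Set X) ∉ C.P)
    (hy : ∀ z : Set X, {y} ∪ z ∉ C.P → C.Equiv ({yb} ∪ z) z)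
    (κ : Set X) (h : {xb} ∪ κ ∈ C.P) : {yb} ∪ κ ∈ C.P := by
  have hxk : {x} ∪ ({xb} ∪ κ) ∉ C.P := by
    intro hmem
    exact hx1 (C.downward hmem (by rw [Set.insert_eq]; exact Set.union_subset_union_right _ (Set.subset_union_left)))
  have hyk : {y} ∪ ({xb} ∪ κ) ∉ C.P := fun hmem => hxk ((hxy _).mpr hmem)
  have := (hy _ hyk ∅)
  simp only [Set.union_empty] at this
  have h2 : {yb} ∪ ({xb} ∪ κ) ∈ C.P := this.mpr h
  exact C.downward h2 (Set.union_subset_union_right _ Set.subset_union_right)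

theorem equiv_negation_congr {X : Type*} [Nonempty X] (C : ConsistencySpace X)
    (x y xb yb : X) (hxy : C.Equiv {x} {y})
    (hx : C.IsNegation x xb) (hy : C.IsNegation y yb) :
    C.Equiv {xb} {yb} := by
  intro κ
  constructor
  · exact neg_dir C x y xb yb hxy hx.1 hy.2.1 κ
  · exact neg_dir C y x yb xb (fun k => (hxy k).symm) hy.1 hx.2.1 κ
end

section
/- Antisymmetry of implication up to equivalence: if x → y and y → x, then {x} ~ {y}. -/
theorem imp_antisymm {X : Type*} [Nonempty X] (C : ConsistencySpace X)
    (x y xb yb : X) (hx : C.IsNegation x xb) (hy : C.IsNegation y yb)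
    (hxy : ({x, yb} : Set X) ∉ C.P) (hyx : ({y, xb} : Set X) ∉ C.P) :
    C.Equiv {x} {y} := by
  intro κ
  have h1 : C.Equiv ({y} ∪ ({x} ∪ κ)) ({x} ∪ κ) := by
    apply hy.2.2
    intro h
    exact hxy (C.downward h (by
      intro a ha; rcases ha with rfl | rfl
      · right; left; rfl
      · left; rfl))
  have h2 : C.Equiv ({x} ∪ ({y} ∪ κ)) ({y} ∪ κ) := by
    apply hx.2.2
    intro h
    exact hyx (C.downward h (by
      intro a ha; rcases ha with rfl | rfl
      · right; left; rfl
      · left; rfl))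
  have h1' := h1 ∅
  have h2' := h2 ∅
  simp only [Set.union_empty] at h1' h2'
  have heq : ({x} : Set X) ∪ ({y} ∪ κ) = {y} ∪ ({x} ∪ κ) := by
    rw [← Set.union_assoc, ← Set.union_assoc, Set.union_comm ({x} : Set X) {y}]
  rw [heq] at h2'
  exact h1'.symm.trans h2'
end

section
/- Transitivity of implication: if x → y and y → z, then x → z. -/
theorem imp_trans {X : Type*} [Nonempty X] (C : ConsistencySpace X)
    (x y z xb yb zb : X) (hx : C.IsNegation x xb) (hy : C.IsNegation y yb)
    (hz : C.IsNegation z zb)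
    (hxy : ({x, yb} : Set X) ∉ C.P) (hyz : ({y, zb} : Set X) ∉ C.P) :
    ({x, zb} : Set X) ∉ C.P := by
  intro hmem
  have h1 : ({y} : Set X) ∪ {zb} ∉ C.P := by
    rw [Set.union_singleton, Set.pair_comm]; exact hyz
  have h2 := hy.2.1 {zb} h1 {x}
  apply hxy
  have h3 : ({zb} : Set X) ∪ {x} ∈ C.P := by
    have : ({zb, x} : Set X) = {x, zb} := Set.pair_comm zb x
    simpa [Set.union_singleton, this] using hmem
  have h4 := h2.mpr h3
  exact C.downward h4 (by intro a ha; rcases ha with h | h <;> simp [h])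
end

section
/- Greatest lower bound property: if t → x and t → y, then {t} ∪ {x, y}‾ is inconsistent, i.e. t → {x,y} in the sense that {t, c̄} ∉ P where c̄ is a negation of the set {x, y} (meaning {x, y} ∪ {c̄} ∉ P and the conditional conditions hold); equivalently, {x, y, t} ~ {t}. -/
theorem imp_pair {X : Type*} [Nonempty X] (C : ConsistencySpace X)
    (t x y tb xb yb cb : X)
    (ht : C.IsNegation t tb) (hx : C.IsNegation x xb) (hy : C.IsNegation y yb)
    (hc : C.IsNegationSet ({x, y} : Set X) cb)
    (htx : ({t, xb} : Set X) ∉ C.P) (hty : ({t, yb} : Set X) ∉ C.P) :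
    ({t, cb} : Set X) ∉ C.P ∧ C.Equiv ({x, y, t} : Set X) {t} := by
  obtain ⟨-, -, hx3⟩ := hx
  obtain ⟨-, -, hy3⟩ := hy
  obtain ⟨hc1, -, -⟩ := hc
  have hxt : C.Equiv ({x} ∪ {t}) {t} :=
    hx3 {t} (by rw [show ({xb} : Set X) ∪ {t} = {t, xb} from by ext a; simp [or_comm]]; exact htx)
  have hyt : C.Equiv ({y} ∪ {t}) {t} :=
    hy3 {t} (by rw [show ({yb} : Set X) ∪ {t} = {t, yb} from by ext a; simp [or_comm]]; exact hty)
  have key : C.Equiv ({x, y, t} : Set X) {t} := by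
    intro κ
    have e1 : ({x, y, t} : Set X) ∪ κ = ({x} ∪ {t}) ∪ ({y} ∪ κ) := by ext a; simp; tauto
    have e2 : ({t} : Set X) ∪ ({y} ∪ κ) = ({y} ∪ {t}) ∪ κ := by ext a; simp; tauto
    rw [e1, hxt ({y} ∪ κ), e2, hyt κ]
  refine ⟨?_, key⟩
  intro h
  have hmem : ({x, y, t} : Set X) ∪ {cb} ∈ C.P := (key {cb}).mpr (by
    rw [show ({t} : Set X) ∪ {cb} = {t, cb} from by ext a; simp; tauto]; exact h)
  exact hc1 (C.downward hmem (by intro a ha; simp at ha ⊢; tauto))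
end

section
/- Least upper bound property: if x → t and y → t, and u is a negation of the set {x̄, ȳ}, then u → t (i.e., {u, t̄} ∉ P). -/
theorem lub_property {X : Type*} [Nonempty X] (C : ConsistencySpace X)
    (x y t xb yb tb u : X)
    (hx : C.IsNegation x xb) (hy : C.IsNegation y yb) (ht : C.IsNegation t tb)
    (hu : C.IsNegationSet ({xb, yb} : Set X) u)
    (hxt : ({x, tb} : Set X) ∉ C.P) (hyt : ({y, tb} : Set X) ∉ C.P) :
    ({u, tb} : Set X) ∉ C.P := by
  intro h
  -- since {x, tb} ∉ P, {xb} ∪ {tb} ~ {tb}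
  have hxtb : ({x} : Set X) ∪ {tb} ∉ C.P := by rwa [Set.singleton_union]
  have e1 := hx.2.1 {tb} hxtb
  -- {xb, tb, u} ∈ P
  have h1 : (({xb} : Set X) ∪ {tb}) ∪ {u} ∈ C.P := by
    refine (e1 {u}).2 ?_
    have : ({tb} : Set X) ∪ {u} = {u, tb} := by
      rw [Set.singleton_union, ← Set.pair_comm]
    rwa [this]
  -- {y} ∪ ({xb} ∪ {tb}) ∉ P, else downward gives {y, tb} ∈ P
  have h2 : ({y} : Set X) ∪ ({xb} ∪ {tb}) ∉ C.P := by
    intro hmem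
    apply hyt
    refine C.downward hmem ?_
    intro a ha
    simp only [Set.mem_insert_iff, Set.mem_union, Set.mem_singleton_iff] at *
    tauto
  have e2 := hy.2.1 ({xb} ∪ {tb}) h2
  have h3 : (({yb} : Set X) ∪ ({xb} ∪ {tb})) ∪ {u} ∈ C.P := (e2 {u}).2 h1
  -- but {xb, yb} ∪ {u} ⊆ the above, contradicting hu.1
  apply hu.1
  refine C.downward h3 ?_
  intro a ha
  simp only [Set.mem_insert_iff, Set.mem_union, Set.mem_singleton_iff] at *
  tauto
end

section
/- Monotonicity: if x → y, then {t, x} ∪ {c̄} ∉ P where c̄ is a negation of the set {t, y}; i.e., the set {t, x} implies the set {t, y}. -/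
theorem imp_monotone {X : Type*} [Nonempty X] (C : ConsistencySpace X)
    (t x y yb cb : X) (hy : C.IsNegation y yb)
    (hc : C.IsNegationSet ({t, y} : Set X) cb)
    (hxy : ({x, yb} : Set X) ∉ C.P) :
    ({t, x} : Set X) ∪ {cb} ∉ C.P := by
  intro h
  have hyb : ({yb} : Set X) ∪ {x} ∉ C.P := by
    intro h'
    exact hxy (C.downward h' (by intro a ha; simp at ha ⊢; tauto))
  have E := hy.2.2 {x} hyb
  have h2 : ({y} : Set X) ∪ {x} ∪ ({t} ∪ {cb}) ∈ C.P := by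
    refine (E ({t} ∪ {cb})).mpr ?_
    have heq : ({x} : Set X) ∪ ({t} ∪ {cb}) = ({t, x} : Set X) ∪ {cb} := by
      ext a; simp
    rw [heq]; exact h
  exact hc.1 (C.downward h2 (by intro a ha; simp at ha ⊢; tauto))
end
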